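/- Let m ≥ 1 and 0 < r < R < 1, and set μ = (1/m)·(1 - (r/R)^{1/3}). Then (r/R) · (mμ) / (ln(1+mμ) · (1-rμ)²) ≤ (r/R) · (1-mμ)^{-3} = 1. -/

import Mathlib

theorem stmt_3 (m : ℕ) (hm : 1 ≤ m) (r R : ℝ) (hr : 0 < r) (hrR : r < R) (hR : R < 1)
    (μ : ℝ) (hμ : μ = (1 / (m : ℝ)) * (1 - (r / R) ^ ((1 : ℝ) / 3))) :
    r / R * ((m * μ) / (Real.log (1 + m * μ) * (1 - r * μ) ^ 2)) ≤
        r / R * (1 - m * μ)⁻¹ ^ 3 ∧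
      r / R * (1 - m * μ)⁻¹ ^ 3 = 1 := by
  have hm1 : (1:ℝ) ≤ m := by exact_mod_cast hm
  have hm0 : (0:ℝ) < m := by linarith
  have hR0 : (0:ℝ) < R := lt_trans hr hrR
  have hq0 : 0 < r / R := div_pos hr hR0
  have hq1 : r / R < 1 := (div_lt_one hR0).mpr hrR
  set ρ := (r / R) ^ ((1:ℝ)/3) with hρ
  have hρ0 : 0 < ρ := Real.rpow_pos_of_pos hq0 _
  have hρ1 : ρ < 1 := Real.rpow_lt_one hq0.le hq1 (by norm_num)
  have hx : (m:ℝ) * μ = 1 - ρ := by rw [hμ]; field_simp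
  have hρ3 : ρ ^ 3 = r / R := by
    rw [hρ, ← Real.rpow_natCast _ 3, ← Real.rpow_mul hq0.le]; norm_num
  have heq : r / R * (1 - m * μ)⁻¹ ^ 3 = 1 := by
    rw [hx, show (1 - (1 - ρ)) = ρ by ring, ← hρ3, inv_pow]
    exact mul_inv_cancel₀ (pow_ne_zero 3 hρ0.ne')
  refine ⟨?_, heq⟩
  have hx0 : 0 < (m:ℝ) * μ := by rw [hx]; linarith
  have hx1 : (m:ℝ) * μ < 1 := by rw [hx]; linarith
  have hμ0 : 0 < μ := by rw [hμ]; apply mul_pos (by positivity); linarith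
  have hr1 : r < 1 := lt_trans hrR hR
  have hrm : r * μ ≤ (m:ℝ) * μ := by
    apply mul_le_mul_of_nonneg_right (by linarith) hμ0.le
  have hs0 : 0 < 1 - r * μ := by linarith
  have hxx : 0 < 1 - (m:ℝ) * μ := by linarith
  have h1x : 0 < 1 + (m:ℝ) * μ := by linarith
  have hL0 : 0 < Real.log (1 + m * μ) := Real.log_pos (by linarith)
  have hL : (m:ℝ) * μ ≤ Real.log (1 + m * μ) * (1 + m * μ) := by
    have h := Real.log_le_sub_one_of_pos (show (0:ℝ) < (1 + m*μ)⁻¹ by positivity)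
    rw [Real.log_inv] at h
    have h2 : 1 - (1 + m*μ)⁻¹ ≤ Real.log (1 + m * μ) := by linarith
    have h3 : 1 - (1 + m*μ)⁻¹ = (m*μ) / (1 + m*μ) := by field_simp; ring
    rw [h3] at h2
    calc (m:ℝ)*μ = (m*μ)/(1+m*μ) * (1+m*μ) := by field_simp
    _ ≤ Real.log (1 + m * μ) * (1 + m*μ) :=
        mul_le_mul_of_nonneg_right h2 h1x.le
  have hss : (1 - (m:ℝ)*μ)^2 ≤ (1 - r*μ)^2 := by
    apply pow_le_pow_left₀ hxx.le (by linarith)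
  apply mul_le_mul_of_nonneg_left _ hq0.le
  rw [inv_pow, ← one_div, div_le_div_iff₀ (by positivity) (by positivity)]
  nlinarith [mul_le_mul_of_nonneg_right hL (pow_nonneg hxx.le 2),
    mul_le_mul_of_nonneg_left hss (mul_pos hL0 h1x).le,
    mul_pos hx0 (pow_pos hxx 2), sq_nonneg ((m:ℝ)*μ),
    mul_pos (mul_pos hx0 hx0) (mul_pos hx0 (pow_pos hxx 2))]
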